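/- Let N be a prime and l an integer with 0 < l < N, and let A^{N,l} = (A_yes^{N,l}, A_no^{N,l}) be the promise problem over the unary alphabet {a} with A_yes^{N,l} = {a^{iN} : i ≥ 0} and A_no^{N,l} = {a^{iN+l} : i ≥ 0}. Then sr(A^{N,l}) = N = max{s(A_yes^{N,l}), s(A_no^{N,l})}; in particular the lower bound max{s(A_yes), s(A_no)} ≤ sr(A) is tight. -/

import Mathlib

/-- The extended transition function `δ̂`: run a finite automaton's transition
function on a whole word. -/
def evalWord {α : Type} {n : ℕ} (δ : Fin n → α → Fin n) (s : Fin n) (w : List α) : Fin n :=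
  w.foldl δ s

/-- A promise version deterministic finite automaton (pvDFA) over the
alphabet `α`, with (finite) state set `Fin n`, transition function `step`,
initial state `start`, and disjoint sets of accepting and rejecting states. -/
structure PVDFA (α : Type) (n : ℕ) where
  step : Fin n → α → Fin n
  start : Fin n
  accept : Finset (Fin n)
  reject : Finset (Fin n)
  disj : Disjoint accept reject

namespace PVDFA

/-- The state reached by the pvDFA after reading the word `w`. -/
def eval {α : Type} {n : ℕ} (M : PVDFA α n) (w : List α) : Fin n :=
  evalWord M.step M.start w

/-- A pvDFA recognizes the promise problem `(Ayes, Ano)`: for every word `w`,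
`w ∈ Ayes` iff the reached state is accepting, and `w ∈ Ano` iff it is rejecting. -/
def Recognizes {α : Type} {n : ℕ} (M : PVDFA α n) (Ayes Ano : Set (List α)) : Prop :=
  (∀ w, w ∈ Ayes ↔ M.eval w ∈ M.accept) ∧ (∀ w, w ∈ Ano ↔ M.eval w ∈ M.reject)

/-- A pvDFA solves the promise problem `(Ayes, Ano)`: every `w ∈ Ayes` leads to an
accepting state and every `w ∈ Ano` leads to a rejecting state. -/
def Solves {α : Type} {n : ℕ} (M : PVDFA α n) (Ayes Ano : Set (List α)) : Prop :=
  (∀ w ∈ Ayes, M.eval w ∈ M.accept) ∧ (∀ w ∈ Ano, M.eval w ∈ M.reject)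

end PVDFA

/-- `s(L)`: the minimal number of states of a DFA recognizing the language `L`. -/
noncomputable def dfaSize {α : Type} (L : Set (List α)) : ℕ :=
  sInf {n : ℕ | ∃ (δ : Fin n → α → Fin n) (s₀ : Fin n) (F : Finset (Fin n)),
    ∀ w, w ∈ L ↔ evalWord δ s₀ w ∈ F}

/-- `sr(A)`: the minimal number of states of a pvDFA recognizing the promise
problem `(Ayes, Ano)`. -/
noncomputable def srSize {α : Type} (Ayes Ano : Set (List α)) : ℕ :=
  sInf {n : ℕ | ∃ M : PVDFA α n, M.Recognizes Ayes Ano}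

/-- `ss(A)`: the minimal number of states of a pvDFA solving the promise
problem `(Ayes, Ano)`. -/
noncomputable def ssSize {α : Type} (Ayes Ano : Set (List α)) : ℕ :=
  sInf {n : ℕ | ∃ M : PVDFA α n, M.Solves Ayes Ano}

section Aux

lemma evalWord_rep {n : ℕ} (δ : Fin n → Unit → Fin n) (s : Fin n) (m : ℕ) :
    evalWord δ s (List.replicate m ()) = (fun t => δ t ())^[m] s := by
  induction m generalizing s with
  | zero => rfl
  | succ k ih =>
    rw [List.replicate_succ]
    show evalWord δ (δ s ()) (List.replicate k ()) = _
    rw [ih, Function.iterate_succ_apply]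

lemma unit_word_eq (w : List Unit) (c : ℕ) : w = List.replicate c () ↔ w.length = c := by
  constructor
  · rintro rfl; simp
  · rintro rfl
    exact List.eq_replicate_iff.mpr ⟨rfl, fun b _ => rfl⟩

lemma period_ge {α : Type*} (f : α → α) (s : α) (i d m : ℕ) (hd : f^[i + d] s = f^[i] s)
    (hm : i ≤ m) : f^[m + d] s = f^[m] s := by
  obtain ⟨t, rfl⟩ := Nat.exists_eq_add_of_le hm
  have h1 : i + t + d = t + (i + d) := by ring
  have h2 : i + t = t + i := by ring
  rw [h1, h2, Function.iterate_add_apply f t (i + d), hd, ← Function.iterate_add_apply]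

lemma period_mul {α : Type*} (f : α → α) (s : α) (i d m k : ℕ) (hd : f^[i + d] s = f^[i] s)
    (hm : i ≤ m) : f^[m + k * d] s = f^[m] s := by
  induction k with
  | zero => simp
  | succ k ih =>
    have h : m + (k + 1) * d = (m + k * d) + d := by ring
    rw [h, period_ge f s i d _ hd (le_trans hm (Nat.le_add_right _ _)), ih]

lemma exists_collision {n : ℕ} (hn : 0 < n) (f : Fin n → Fin n) (s : Fin n) :
    ∃ i d, 0 < d ∧ i + d ≤ n ∧ f^[i + d] s = f^[i] s := by
  obtain ⟨x, y, hxy, hfxy⟩ :=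
    Fintype.exists_ne_map_eq_of_card_lt (fun x : Fin (n + 1) => f^[x.val] s) (by simp)
  rcases lt_or_gt_of_ne hxy with h | h
  · exact ⟨x.val, y.val - x.val, by omega, by omega, by rw [Nat.add_sub_cancel' (le_of_lt h)]; exact hfxy.symm⟩
  · exact ⟨y.val, x.val - y.val, by omega, by omega, by rw [Nat.add_sub_cancel' (le_of_lt h)]; exact hfxy⟩

lemma exists_shift (N d p r : ℕ) (hN : N.Prime) (hd : ¬ N ∣ d) (hr : r < N) :
    ∃ k m, p + k * d = m * N + r := by
  haveI : Fact N.Prime := ⟨hN⟩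
  set u : ZMod N := (d : ZMod N) with hu
  have hu0 : u ≠ 0 := by
    rw [hu, Ne, ZMod.natCast_eq_zero_iff]; exact hd
  set k0 : ZMod N := ((r : ZMod N) - p) * u⁻¹ with hk0
  refine ⟨k0.val + N, (p + (k0.val + N) * d) / N, ?_⟩
  have hmod : (p + (k0.val + N) * d) % N = r % N := by
    have : ((p + (k0.val + N) * d : ℕ) : ZMod N) = ((r : ℕ) : ZMod N) := by
      push_cast
      rw [ZMod.natCast_val, ZMod.cast_id, ZMod.natCast_self]
      rw [hk0]
      field_simp
      rw [hu]; ring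
    rw [ZMod.natCast_eq_natCast_iff] at this
    exact this
  have hge : r ≤ p + (k0.val + N) * d := by
    have hd1 : 1 ≤ d := by
      rcases Nat.eq_zero_or_pos d with h | h
      · exact absurd (h ▸ dvd_zero N) hd
      · exact h
    calc r ≤ N := le_of_lt hr
    _ ≤ (k0.val + N) * 1 := by nlinarith
    _ ≤ p + (k0.val + N) * d := by nlinarith
  have hrm : r % N = r := Nat.mod_eq_of_lt hr
  have := Nat.div_add_mod' (p + (k0.val + N) * d) N
  omega

lemma not_dvd_of_lt (N d : ℕ) (h0 : 0 < d) (h1 : d < N) : ¬ N ∣ d := fun h =>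
  absurd (Nat.le_of_dvd h0 h) (not_le.mpr h1)

-- the counter automaton facts
open Fin.NatCast Fin.CommRing

lemma counter_eval (N : ℕ) [NeZero N] (m : ℕ) :
    (fun t : Fin N => t + 1)^[m] 0 = (m : Fin N) := by
  induction m with
  | zero => simp
  | succ k ih => rw [Function.iterate_succ_apply', ih]; push_cast; ring

lemma fin_cast_eq_iff (N : ℕ) [NeZero N] (m r : ℕ) : (m : Fin N) = (r : Fin N) ↔ m % N = r % N := by
  rw [Fin.ext_iff, Fin.val_natCast, Fin.val_natCast]


lemma mem_yes_iff (N : ℕ) (hN : 0 < N) (w : List Unit) :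
    (∃ i : ℕ, w = List.replicate (i * N) ()) ↔ w.length % N = 0 := by
  constructor
  · rintro ⟨i, rfl⟩; simp [Nat.mul_mod_left]
  · intro h
    refine ⟨w.length / N, (unit_word_eq _ _).mpr ?_⟩
    have := Nat.div_add_mod' w.length N
    omega

lemma mem_no_iff (N l : ℕ) (hlN : l < N) (w : List Unit) :
    (∃ i : ℕ, w = List.replicate (i * N + l) ()) ↔ w.length % N = l % N := by
  constructor
  · rintro ⟨i, rfl⟩; simp [Nat.mul_add_mod']
  · intro h
    refine ⟨w.length / N, (unit_word_eq _ _).mpr ?_⟩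
    have := Nat.div_add_mod' w.length N
    have : l % N = l := Nat.mod_eq_of_lt hlN
    omega

lemma counter_recognizes (N l : ℕ) (hN : N.Prime) (hl : 0 < l) (hlN : l < N) :
    ∃ M : PVDFA Unit N, M.Recognizes {w : List Unit | ∃ i : ℕ, w = List.replicate (i * N) ()}
      {w : List Unit | ∃ i : ℕ, w = List.replicate (i * N + l) ()} := by
  haveI : NeZero N := ⟨hN.pos.ne'⟩
  have hdisj : Disjoint ({0} : Finset (Fin N)) {(l : Fin N)} := by
    rw [Finset.disjoint_left]
    intro a ha hb
    rw [Finset.mem_singleton] at ha hb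
    rw [ha] at hb
    rw [show (0 : Fin N) = ((0 : ℕ) : Fin N) by simp, fin_cast_eq_iff] at hb
    rw [Nat.zero_mod, Nat.mod_eq_of_lt hlN] at hb
    omega
  refine ⟨⟨fun s _ => s + 1, 0, {0}, {(l : Fin N)}, hdisj⟩, ?_, ?_⟩ <;> intro w <;>
    have hw : w = List.replicate w.length () := (unit_word_eq w w.length).mpr rfl <;>
    have heval : evalWord (fun (s : Fin N) (_ : Unit) => s + 1) 0 w = (w.length : Fin N) := by
      conv_lhs => rw [hw]
      rw [evalWord_rep, counter_eval]
  · rw [Set.mem_setOf_eq, mem_yes_iff N hN.pos w]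
    show _ ↔ _ ∈ ({0} : Finset (Fin N))
    rw [Finset.mem_singleton, PVDFA.eval]
    show _ ↔ evalWord (fun (s : Fin N) (_ : Unit) => s + 1) 0 w = 0
    rw [heval, show (0 : Fin N) = ((0 : ℕ) : Fin N) by simp, fin_cast_eq_iff, Nat.zero_mod]
  · rw [Set.mem_setOf_eq, mem_no_iff N l hlN w]
    show _ ↔ _ ∈ ({(l : Fin N)} : Finset (Fin N))
    rw [Finset.mem_singleton, PVDFA.eval]
    show _ ↔ evalWord (fun (s : Fin N) (_ : Unit) => s + 1) 0 w = (l : Fin N)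
    rw [heval, fin_cast_eq_iff]

lemma lower_sr (N l : ℕ) (hN : N.Prime) (hlN : l < N) {n : ℕ} (M : PVDFA Unit n)
    (hy : ∀ w, (∃ i : ℕ, w = List.replicate (i * N) ()) → M.eval w ∈ M.accept)
    (hno : ∀ w, (∃ i : ℕ, w = List.replicate (i * N + l) ()) → M.eval w ∈ M.reject) :
    N ≤ n := by
  by_contra hc
  push_neg at hc
  have hn0 : 0 < n := M.start.pos
  obtain ⟨i, d, hd0, hdn, hper⟩ := exists_collision hn0 (fun t => M.step t ()) M.start
  have hNd : ¬ N ∣ d := not_dvd_of_lt N d hd0 (by omega)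
  obtain ⟨k, m, hkm⟩ := exists_shift N d (i * N) l hN hNd hlN
  have h1 : M.eval (List.replicate (i * N) ()) ∈ M.accept := hy _ ⟨i, rfl⟩
  have h2 : M.eval (List.replicate (i * N + k * d) ()) ∈ M.reject := hno _ ⟨m, by rw [hkm]⟩
  have he : M.eval (List.replicate (i * N + k * d) ()) = M.eval (List.replicate (i * N) ()) := by
    show evalWord _ _ _ = evalWord _ _ _
    rw [evalWord_rep, evalWord_rep]
    exact period_mul _ M.start i d (i * N) k hper (by nlinarith [hN.pos])
  rw [he] at h2
  exact Finset.disjoint_left.mp M.disj h1 h2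

lemma lower_dfa_yes (N : ℕ) (hN : 0 < N) {n : ℕ} (δ : Fin n → Unit → Fin n) (s₀ : Fin n)
    (F : Finset (Fin n))
    (h : ∀ w, (∃ i : ℕ, w = List.replicate (i * N) ()) ↔ evalWord δ s₀ w ∈ F) : N ≤ n := by
  by_contra hc
  push_neg at hc
  obtain ⟨i, d, hd0, hdn, hper⟩ := exists_collision s₀.pos (fun t => δ t ()) s₀
  have hNd : ¬ N ∣ d := not_dvd_of_lt N d hd0 (by omega)
  have h1 : evalWord δ s₀ (List.replicate (i * N) ()) ∈ F := (h _).mp ⟨i, rfl⟩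
  have he : evalWord δ s₀ (List.replicate (i * N + d) ()) =
      evalWord δ s₀ (List.replicate (i * N) ()) := by
    rw [evalWord_rep, evalWord_rep]
    exact period_ge _ s₀ i d (i * N) hper (by nlinarith)
  obtain ⟨j, hj⟩ := (h _).mpr (he ▸ h1)
  have hj' : i * N + d = j * N := by
    have := congrArg List.length hj
    simpa using this
  refine hNd ((Nat.dvd_add_right (dvd_mul_left N i)).mp ?_)
  rw [hj']
  exact dvd_mul_left N j

lemma lower_dfa_no (N l : ℕ) (hN : 0 < N) {n : ℕ} (δ : Fin n → Unit → Fin n) (s₀ : Fin n)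
    (F : Finset (Fin n))
    (h : ∀ w, (∃ i : ℕ, w = List.replicate (i * N + l) ()) ↔ evalWord δ s₀ w ∈ F) : N ≤ n := by
  by_contra hc
  push_neg at hc
  obtain ⟨i, d, hd0, hdn, hper⟩ := exists_collision s₀.pos (fun t => δ t ()) s₀
  have hNd : ¬ N ∣ d := not_dvd_of_lt N d hd0 (by omega)
  have h1 : evalWord δ s₀ (List.replicate (i * N + l) ()) ∈ F := (h _).mp ⟨i, rfl⟩
  have he : evalWord δ s₀ (List.replicate (i * N + l + d) ()) =
      evalWord δ s₀ (List.replicate (i * N + l) ()) := by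
    rw [evalWord_rep, evalWord_rep]
    exact period_ge _ s₀ i d (i * N + l) hper (by nlinarith)
  obtain ⟨j, hj⟩ := (h _).mpr (he ▸ h1)
  have hj' : i * N + l + d = j * N + l := by
    have := congrArg List.length hj
    simpa using this
  have hj'' : i * N + d = j * N := by omega
  refine hNd ((Nat.dvd_add_right (dvd_mul_left N i)).mp ?_)
  rw [hj'']
  exact dvd_mul_left N j

end Aux

/-- for a prime `N` and `0 < l < N`, the promise problem
`A^{N,l} = ({a^{iN}}, {a^{iN+l}})` over the unary alphabet satisfies
`sr(A^{N,l}) = N = max{s(A_yes), s(A_no)}`; in particular the lower bound is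
tight. -/
theorem sr_lower_bound_tight (N l : ℕ) (hN : N.Prime) (hl : 0 < l) (hlN : l < N) :
    srSize {w : List Unit | ∃ i : ℕ, w = List.replicate (i * N) ()}
           {w : List Unit | ∃ i : ℕ, w = List.replicate (i * N + l) ()} = N ∧
    max (dfaSize {w : List Unit | ∃ i : ℕ, w = List.replicate (i * N) ()})
        (dfaSize {w : List Unit | ∃ i : ℕ, w = List.replicate (i * N + l) ()}) = N := by
  haveI : NeZero N := ⟨hN.pos.ne'⟩
  obtain ⟨M, hM⟩ := counter_recognizes N l hN hl hlN
  refine ⟨?_, ?_⟩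
  · refine le_antisymm (Nat.sInf_le ⟨M, hM⟩) (le_csInf ⟨N, M, hM⟩ ?_)
    rintro n ⟨M', h1', h2'⟩
    exact lower_sr N l hN hlN M' (fun w hw => (h1' w).mp hw) (fun w hw => (h2' w).mp hw)
  · have hy : dfaSize {w : List Unit | ∃ i : ℕ, w = List.replicate (i * N) ()} = N := by
      refine le_antisymm (Nat.sInf_le ⟨M.step, M.start, M.accept, hM.1⟩)
        (le_csInf ⟨N, M.step, M.start, M.accept, hM.1⟩ ?_)
      rintro n ⟨δ, s₀, F, h⟩
      exact lower_dfa_yes N hN.pos δ s₀ F h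
    have hn : dfaSize {w : List Unit | ∃ i : ℕ, w = List.replicate (i * N + l) ()} = N := by
      refine le_antisymm (Nat.sInf_le ⟨M.step, M.start, M.reject, hM.2⟩)
        (le_csInf ⟨N, M.step, M.start, M.reject, hM.2⟩ ?_)
      rintro n ⟨δ, s₀, F, h⟩
      exact lower_dfa_no N l hN.pos δ s₀ F h
    rw [hy, hn, max_self]
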